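/- inf over λ ∈ [0,3) of exp{−λx + λ²v²/(2(1 − λ/3))} equals exp{−x²/(v²(1+√(1+2x/(3v²))) + x/3)} for every x ≥ 0 and v > 0. -/

import Mathlib

open Real

theorem inf_bennett (x v : ℝ) (hx : 0 ≤ x) (hv : 0 < v) :
    sInf {y : ℝ | ∃ lam : ℝ, 0 ≤ lam ∧ lam < 3 ∧
        y = Real.exp (-(lam * x) + lam^2 * v^2 / (2 * (1 - lam/3)))}
      = Real.exp (-(x^2 / (v^2 * (1 + Real.sqrt (1 + 2*x/(3*v^2))) + x/3))) := by
  have hv2 : (0:ℝ) < v^2 := by positivity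
  set u := Real.sqrt (1 + 2*x/(3*v^2)) with hu
  have harg : (0:ℝ) ≤ 1 + 2*x/(3*v^2) := by positivity
  have hu2 : u^2 = 1 + 2*x/(3*v^2) := Real.sq_sqrt harg
  have hu1 : 1 ≤ u := by
    have h2 : (0:ℝ) ≤ 2*x/(3*v^2) := by positivity
    have h := Real.sqrt_le_sqrt (show (1:ℝ) ≤ 1 + 2*x/(3*v^2) by linarith)
    rwa [Real.sqrt_one] at h
  have hu0 : 0 < u := by linarith
  have hune : u ≠ 0 := ne_of_gt hu0
  have hxu : x = 3*v^2*(u^2-1)/2 := by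
    rw [hu2]; field_simp; ring
  have hm : -(x^2 / (v^2 * (1 + u) + x/3)) = -(9*v^2/2)*(u-1)^2 := by
    rw [hxu]
    have h1 : v^2 * (1 + u) + 3*v^2*(u^2-1)/2/3 = v^2*(u+1)^2/2 := by ring
    rw [h1]
    have hne : v^2*(u+1)^2 ≠ 0 := by positivity
    field_simp
    ring
  rw [hm]
  apply IsLeast.csInf_eq
  constructor
  · refine ⟨3 - 3/u, ?_, ?_, ?_⟩
    · have : 3/u ≤ 3 := by
        rw [div_le_iff₀ hu0]; nlinarith
      linarith
    · have : 0 < 3/u := by positivity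
      linarith
    · congr 1
      have ht : 2 * (1 - (3 - 3/u)/3) = 2/u := by ring
      rw [ht, hxu]
      field_simp
      ring
  · rintro y ⟨lam, h0, h3, rfl⟩
    apply Real.exp_le_exp.mpr
    set t := 1 - lam/3 with hT
    have ht0 : 0 < t := by rw [hT]; linarith
    have htne : t ≠ 0 := ne_of_gt ht0
    have hlam : lam = 3*(1-t) := by rw [hT]; ring
    have key : -(lam*x) + lam^2*v^2/(2*(1-lam/3)) - (-(9*v^2/2)*(u-1)^2)
        = (9*v^2/2)*(t*u-1)^2 / t := by
      have h2t : 2*(1-lam/3) = 2*t := by rw [hT]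
      rw [h2t, hlam, hxu]
      field_simp
      ring
    nlinarith [sq_nonneg (t*u-1), div_nonneg (mul_nonneg (by positivity : (0:ℝ) ≤ 9*v^2/2) (sq_nonneg (t*u-1))) (le_of_lt ht0)]
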